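/- Let U × I be a neighborhood of (0,0) in ℂ × ℝ and let f : U × I → ℝ satisfy f(z,0) ≡ 0, with f, ∂f/∂t, and ∂²f/∂t² all C¹-smooth on U × I, and let α ∈ ℝ. Then (i + ∂f/∂t(z,t))·exp( α(it − f(z,t)) ) = i + ∂f/∂t(z,0) for all (z,t) ∈ U × I if and only if there exists a C¹-smooth function R : U → ℝ such that cos(R(z) + αt) ≠ 0 for all (z,t) ∈ U × I and f(z,t) = −(1/α) log| cos(R(z)+αt)/cos(R(z)) | for all (z,t) ∈ U × I in the case α ≠ 0, and f(z,t) = tan(R(z))·t for all (z,t) ∈ U × I in the case α = 0. -/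

import Mathlib

open Filter Set Metric Complex

lemma auxConst {a b : ℝ} {g : ℝ → ℝ} (h : ∀ t ∈ Set.Ioo a b, HasDerivAt g 0 t)
    {x y : ℝ} (hx : x ∈ Set.Ioo a b) (hy : y ∈ Set.Ioo a b) : g x = g y := by
  refine (convex_Ioo a b).is_const_of_fderivWithin_eq_zero
    (fun t ht => (h t ht).differentiableAt.differentiableWithinAt) (fun t ht => ?_) hx hy
  rw [fderivWithin_eq_fderiv (isOpen_Ioo.uniqueDiffOn t ht) (h t ht).differentiableAt,
    (h t ht).hasFDerivAt.fderiv]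
  ext; simp

lemma auxDecomp (c c0 F A : ℝ)
    (h : (Complex.I + (c:ℂ)) * (((Real.cos A : ℂ) + (Real.sin A : ℂ) * Complex.I) * (Real.exp F : ℂ)) = Complex.I + (c0:ℂ)) :
    (c * Real.cos A - Real.sin A) * Real.exp F = c0 ∧ (Real.cos A + c * Real.sin A) * Real.exp F = 1 := by
  have h1 := congrArg Complex.re h
  have h2 := congrArg Complex.im h
  simp [Complex.add_re, Complex.add_im, Complex.mul_re, Complex.mul_im,
    Complex.cos_ofReal_re, Complex.sin_ofReal_re, Complex.exp_ofReal_re] at h1 h2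
  constructor <;> linarith

lemma auxKey (x : ℝ) (hx : Real.cos x ≠ 0) :
    (Complex.I + (Real.tan x : ℂ)) * (Real.cos x : ℂ) = Complex.I * Complex.exp (-(x:ℂ) * Complex.I) := by
  have hx' : Complex.cos (x:ℂ) ≠ 0 := by
    rw [← Complex.ofReal_cos]; exact_mod_cast hx
  rw [Complex.exp_mul_I, Complex.cos_neg, Complex.sin_neg, Real.tan_eq_sin_div_cos]
  simp only [Complex.ofReal_div, Complex.ofReal_sin, Complex.ofReal_cos]
  field_simp
  linear_combination Complex.sin (x:ℂ) * Complex.I_sq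

theorem stmt_13 (ε δ α : ℝ) (hε : 0 < ε) (hδ : 0 < δ)
    (f ft ftt : ℂ → ℝ → ℝ)
    (hf0 : ∀ z ∈ ball (0:ℂ) ε, f z 0 = 0)
    (hfsm : ContDiffOn ℝ 1 (fun p : ℂ × ℝ => f p.1 p.2) (ball (0:ℂ) ε ×ˢ Set.Ioo (-δ) δ))
    (hft : ∀ z ∈ ball (0:ℂ) ε, ∀ t ∈ Set.Ioo (-δ) δ, HasDerivAt (fun s => f z s) (ft z t) t)
    (hftsm : ContDiffOn ℝ 1 (fun p : ℂ × ℝ => ft p.1 p.2) (ball (0:ℂ) ε ×ˢ Set.Ioo (-δ) δ))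
    (hftt : ∀ z ∈ ball (0:ℂ) ε, ∀ t ∈ Set.Ioo (-δ) δ, HasDerivAt (fun s => ft z s) (ftt z t) t)
    (hfttsm : ContDiffOn ℝ 1 (fun p : ℂ × ℝ => ftt p.1 p.2) (ball (0:ℂ) ε ×ˢ Set.Ioo (-δ) δ)) :
    (∀ z ∈ ball (0:ℂ) ε, ∀ t ∈ Set.Ioo (-δ) δ,
        (Complex.I + (ft z t : ℂ)) * Complex.exp ((α:ℂ) * (Complex.I * (t:ℂ) - (f z t : ℂ)))
          = Complex.I + (ft z 0 : ℂ)) ↔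
    (∃ R : ℂ → ℝ, ContDiffOn ℝ 1 R (ball (0:ℂ) ε) ∧
      (∀ z ∈ ball (0:ℂ) ε, ∀ t ∈ Set.Ioo (-δ) δ, Real.cos (R z + α * t) ≠ 0) ∧
      (α ≠ 0 → ∀ z ∈ ball (0:ℂ) ε, ∀ t ∈ Set.Ioo (-δ) δ,
        f z t = -(1/α) * Real.log |Real.cos (R z + α * t) / Real.cos (R z)|) ∧
      (α = 0 → ∀ z ∈ ball (0:ℂ) ε, ∀ t ∈ Set.Ioo (-δ) δ,
        f z t = Real.tan (R z) * t)) := by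
  have h0δ : (0:ℝ) ∈ Set.Ioo (-δ) δ := ⟨by linarith, hδ⟩
  constructor
  · -- forward direction
    intro hE
    have hEq : ∀ z ∈ ball (0:ℂ) ε, ∀ t ∈ Set.Ioo (-δ) δ,
        (ft z t * Real.cos (α*t) - Real.sin (α*t)) * Real.exp (-(α * f z t)) = ft z 0 ∧
        (Real.cos (α*t) + ft z t * Real.sin (α*t)) * Real.exp (-(α * f z t)) = 1 := by
      intro z hz t ht
      have hE' := hE z hz t ht
      rw [show (α:ℂ) * (Complex.I * (t:ℂ) - ((f z t : ℝ):ℂ)) =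
            ((α*t : ℝ):ℂ) * Complex.I + ((-(α * f z t) : ℝ):ℂ) by push_cast; ring,
        Complex.exp_add, Complex.exp_mul_I, ← Complex.ofReal_cos, ← Complex.ofReal_sin,
        ← Complex.ofReal_exp] at hE'
      exact auxDecomp (ft z t) (ft z 0) _ _ hE'
    have hstar : ∀ z ∈ ball (0:ℂ) ε, ∀ t ∈ Set.Ioo (-δ) δ,
        Real.exp (-(α * f z t)) = Real.cos (α*t) - ft z 0 * Real.sin (α*t) := by
      intro z hz t ht
      obtain ⟨h1, h2⟩ := hEq z hz t ht
      linear_combination Real.cos (α*t) * h2 - Real.sin (α*t) * h1 -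
        Real.exp (-(α * f z t)) * Real.sin_sq_add_cos_sq (α*t)
    have hcosR : ∀ z : ℂ, 0 < Real.cos (Real.arctan (ft z 0)) := fun z => Real.cos_arctan_pos _
    have hcosadd : ∀ z ∈ ball (0:ℂ) ε, ∀ t ∈ Set.Ioo (-δ) δ,
        Real.cos (Real.arctan (ft z 0) + α*t)
          = Real.cos (Real.arctan (ft z 0)) * Real.exp (-(α * f z t)) := by
      intro z hz t ht
      have htan : Real.sin (Real.arctan (ft z 0)) = ft z 0 * Real.cos (Real.arctan (ft z 0)) := by
        have h := Real.tan_mul_cos (x := Real.arctan (ft z 0)) (hcosR z).ne'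
        rw [Real.tan_arctan] at h
        exact h.symm
      rw [Real.cos_add, hstar z hz t ht, htan]; ring
    have hRsm : ContDiffOn ℝ 1 (fun z : ℂ => Real.arctan (ft z 0)) (ball (0:ℂ) ε) := by
      have h1 : ContDiffOn ℝ 1 (fun z : ℂ => ft z 0) (ball (0:ℂ) ε) :=
        hftsm.comp ((contDiff_id.prodMk contDiff_const).contDiffOn)
          (fun z hz => Set.mk_mem_prod hz h0δ)
      exact Real.contDiff_arctan.comp_contDiffOn h1
    refine ⟨fun z => Real.arctan (ft z 0), hRsm, ?_, ?_, ?_⟩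
    · intro z hz t ht
      rw [hcosadd z hz t ht]
      exact (mul_pos (hcosR z) (Real.exp_pos _)).ne'
    · intro hα z hz t ht
      have h1 : Real.cos (Real.arctan (ft z 0) + α*t) / Real.cos (Real.arctan (ft z 0))
          = Real.exp (-(α * f z t)) := by
        rw [hcosadd z hz t ht, mul_div_cancel_left₀ _ (hcosR z).ne']
      rw [h1, abs_of_pos (Real.exp_pos _), Real.log_exp]
      field_simp
    · intro hα z hz t ht
      subst hα
      have hc : ∀ s ∈ Set.Ioo (-δ) δ, ft z s = ft z 0 := by
        intro s hs
        have h := (hEq z hz s hs).1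
        simpa using h
      have hkey : f z t = ft z 0 * t := by
        have hg : ∀ s ∈ Set.Ioo (-δ) δ, HasDerivAt (fun u => f z u - ft z 0 * u) 0 s := by
          intro s hs
          have hd := hft z hz s hs
          rw [hc s hs] at hd
          exact (hd.sub ((hasDerivAt_id s).const_mul (ft z 0))).congr_deriv (by simp)
        have h2 : f z t - ft z 0 * t = f z 0 - ft z 0 * 0 := auxConst hg ht h0δ
        simp [hf0 z hz] at h2
        linarith
      rw [hkey, Real.tan_arctan]
  · -- converse direction
    rintro ⟨R, hRsm, hcne, hfα, hfz⟩ z hz t ht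
    have hcR : Real.cos (R z) ≠ 0 := by
      have h := hcne z hz 0 h0δ
      simpa using h
    by_cases hα : α = 0
    · subst hα
      have hftz : ∀ s ∈ Set.Ioo (-δ) δ, ft z s = Real.tan (R z) := by
        intro s hs
        refine (hft z hz s hs).unique ?_
        have hg : HasDerivAt (fun u : ℝ => Real.tan (R z) * u) (Real.tan (R z)) s := by
          simpa using (hasDerivAt_id s).const_mul (Real.tan (R z))
        exact hg.congr_of_eventuallyEq (Filter.eventuallyEq_of_mem
          (isOpen_Ioo.mem_nhds hs) (fun u hu => hfz rfl z hz u hu))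
      rw [hftz t ht, hftz 0 h0δ]
      norm_num
    · have hpos : ∀ s ∈ Set.Ioo (-δ) δ, 0 < Real.cos (R z + α*s) / Real.cos (R z) := by
        intro s hs
        have hgs : Real.cos (R z + α*s) ≠ 0 := hcne z hz s hs
        have hsign : 0 < Real.cos (R z + α*s) * Real.cos (R z) := by
          rcases lt_trichotomy (Real.cos (R z + α*s) * Real.cos (R z)) 0 with hlt | heq | hgt
          · exfalso
            have hcont : ContinuousOn (fun u : ℝ => Real.cos (R z + α*u)) (Set.uIcc 0 s) :=
              (Real.continuous_cos.comp (by continuity)).continuousOn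
            have hsub : Set.uIcc 0 s ⊆ Set.Ioo (-δ) δ :=
              (Set.ordConnected_Ioo).uIcc_subset h0δ hs
            have hmem : (0:ℝ) ∈ Set.uIcc (Real.cos (R z + α*0)) (Real.cos (R z + α*s)) := by
              rw [Set.mem_uIcc]
              simp only [mul_zero, add_zero]
              rcases mul_neg_iff.1 hlt with ⟨h1, h2⟩ | ⟨h1, h2⟩
              · exact Or.inl ⟨h2.le, h1.le⟩
              · exact Or.inr ⟨h1.le, h2.le⟩
            obtain ⟨u, hu, hu0⟩ := intermediate_value_uIcc hcont hmem
            exact hcne z hz u (hsub hu) hu0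
          · exact absurd heq (mul_ne_zero hgs hcR)
          · exact hgt
        rcases mul_pos_iff.1 hsign with ⟨h1, h2⟩ | ⟨h1, h2⟩
        · exact div_pos h1 h2
        · exact div_pos_of_neg_of_neg h1 h2
      have hflog : ∀ s ∈ Set.Ioo (-δ) δ,
          f z s = -(1/α) * Real.log (Real.cos (R z + α*s) / Real.cos (R z)) := by
        intro s hs
        rw [hfα hα z hz s hs, Real.log_abs]
      have hfts : ∀ s ∈ Set.Ioo (-δ) δ, ft z s = Real.tan (R z + α*s) := by
        intro s hs
        have hθ : Real.cos (R z + α*s) ≠ 0 := hcne z hz s hs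
        refine (hft z hz s hs).unique ?_
        have hlin : HasDerivAt (fun u : ℝ => R z + α * u) α s := by
          exact ((hasDerivAt_const s (R z)).add ((hasDerivAt_id s).const_mul α)).congr_deriv (by simp)
        have hcosd : HasDerivAt (fun u : ℝ => Real.cos (R z + α*u))
            (-Real.sin (R z + α*s) * α) s := (Real.hasDerivAt_cos _).comp s hlin
        have hdivd : HasDerivAt (fun u : ℝ => Real.cos (R z + α*u) / Real.cos (R z))
            (-Real.sin (R z + α*s) * α / Real.cos (R z)) s := hcosd.div_const _
        have hne : Real.cos (R z + α*s) / Real.cos (R z) ≠ 0 := (hpos s hs).ne'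
        have hlogd := (Real.hasDerivAt_log hne).comp s hdivd
        have hfull := hlogd.const_mul (-(1/α))
        have heq : (-(1/α)) * ((Real.cos (R z + α*s) / Real.cos (R z))⁻¹ *
            (-Real.sin (R z + α*s) * α / Real.cos (R z))) = Real.tan (R z + α*s) := by
          rw [Real.tan_eq_sin_div_cos]
          field_simp
        rw [heq] at hfull
        exact hfull.congr_of_eventuallyEq (Filter.eventuallyEq_of_mem
          (isOpen_Ioo.mem_nhds hs) (fun u hu => hflog u hu))
      have hθ : Real.cos (R z + α*t) ≠ 0 := hcne z hz t ht
      have hft0 : ft z 0 = Real.tan (R z) := by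
        have h := hfts 0 h0δ
        simpa using h
      rw [hfts t ht, hft0, hflog t ht]
      rw [show (α:ℂ) * (Complex.I * (t:ℂ) -
            ((-(1/α) * Real.log (Real.cos (R z + α*t) / Real.cos (R z)) : ℝ):ℂ)) =
          ((α*t : ℝ):ℂ) * Complex.I + ((Real.log (Real.cos (R z + α*t) / Real.cos (R z)) : ℝ):ℂ) by
        push_cast
        have : (α:ℂ) ≠ 0 := by exact_mod_cast hα
        field_simp
        ring,
        Complex.exp_add, ← Complex.ofReal_exp, Real.exp_log (hpos t ht)]
      have hcR' : (Real.cos (R z) : ℂ) ≠ 0 := by exact_mod_cast hcR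
      have hθ' : (Real.cos (R z + α*t) : ℂ) ≠ 0 := by exact_mod_cast hθ
      refine mul_right_cancel₀ hcR' ?_
      calc (Complex.I + (Real.tan (R z + α*t) : ℂ)) *
            (Complex.exp (((α*t:ℝ):ℂ) * Complex.I) * ((Real.cos (R z + α*t) / Real.cos (R z) : ℝ):ℂ))
            * (Real.cos (R z) : ℂ)
          = ((Complex.I + (Real.tan (R z + α*t) : ℂ)) * (Real.cos (R z + α*t) : ℂ)) *
            Complex.exp (((α*t:ℝ):ℂ) * Complex.I) := by
            have hXc : ((Real.cos (R z + α*t) / Real.cos (R z) : ℝ):ℂ) * ((Real.cos (R z):ℝ):ℂ)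
                = ((Real.cos (R z + α*t):ℝ):ℂ) := by
              rw [← Complex.ofReal_mul]
              norm_cast
              exact div_mul_cancel₀ _ hcR
            linear_combination (Complex.I + (Real.tan (R z + α*t) : ℂ)) *
              Complex.exp (((α*t:ℝ):ℂ) * Complex.I) * hXc
        _ = (Complex.I * Complex.exp (-((R z + α*t : ℝ):ℂ) * Complex.I)) *
            Complex.exp (((α*t:ℝ):ℂ) * Complex.I) := by rw [auxKey _ hθ]
        _ = Complex.I * Complex.exp (-((R z : ℝ):ℂ) * Complex.I) := by
            rw [mul_assoc, ← Complex.exp_add]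
            congr 2
            push_cast
            ring
        _ = (Complex.I + (Real.tan (R z) : ℂ)) * (Real.cos (R z) : ℂ) := (auxKey _ hcR).symm
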